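/- For every integer M ≥ 1: f_M(0) = 1, f_M(1) = -M, f_M is strictly decreasing on the interval [0,1], and f_M has exactly one root in the open interval (0,1). -/

import Mathlib

noncomputable def fK (M : ℕ) (q : ℝ) : ℝ :=
  ((1 - q) * (1 + q - q ^ 2)) ^ M + 2 * (1 - 2 * q ^ 2 + q ^ 3) ^ M -
    ((1 - q) ^ 2 * (1 + 2 * q)) ^ M - (1 - q ^ 2) ^ M - (M : ℝ) * q ^ 2

lemma fK_hasDerivAt (M : ℕ) (q : ℝ) :
    HasDerivAt (fK M)
      ((M : ℝ) * ((1 - q) * (1 + q - q ^ 2)) ^ (M - 1) * (3 * q ^ 2 - 4 * q)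
        + 2 * ((M : ℝ) * (1 - 2 * q ^ 2 + q ^ 3) ^ (M - 1) * (3 * q ^ 2 - 4 * q))
        - (M : ℝ) * ((1 - q) ^ 2 * (1 + 2 * q)) ^ (M - 1) * (6 * q ^ 2 - 6 * q)
        - (M : ℝ) * (1 - q ^ 2) ^ (M - 1) * (-(2 * q))
        - (M : ℝ) * (2 * q)) q := by
  have hid : HasDerivAt (fun x : ℝ => x) 1 q := hasDerivAt_id q
  have h2 : HasDerivAt (fun x : ℝ => x ^ 2) (2 * q) q := by
    simpa using hasDerivAt_pow 2 q
  have h3 : HasDerivAt (fun x : ℝ => x ^ 3) (3 * q ^ 2) q := by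
    simpa using hasDerivAt_pow 3 q
  have hA : HasDerivAt (fun x : ℝ => (1 - x) * (1 + x - x ^ 2)) (3 * q ^ 2 - 4 * q) q := by
    have := (hid.const_sub 1).fun_mul (((hid.const_add 1).fun_sub h2))
    exact this.congr_deriv (by ring)
  have hB : HasDerivAt (fun x : ℝ => 1 - 2 * x ^ 2 + x ^ 3) (3 * q ^ 2 - 4 * q) q := by
    have := ((h2.const_mul 2).const_sub 1).fun_add h3
    exact this.congr_deriv (by ring)
  have hC : HasDerivAt (fun x : ℝ => (1 - x) ^ 2 * (1 + 2 * x)) (6 * q ^ 2 - 6 * q) q := by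
    have := ((hid.const_sub 1).fun_pow 2).fun_mul ((hid.const_mul 2).const_add 1)
    exact this.congr_deriv (by ring)
  have hD : HasDerivAt (fun x : ℝ => 1 - x ^ 2) (-(2 * q)) q := by
    have := h2.const_sub 1
    convert this using 1
  have hE : HasDerivAt (fun x : ℝ => (M : ℝ) * x ^ 2) ((M : ℝ) * (2 * q)) q :=
    h2.const_mul _
  exact ((((hA.pow M).add ((hB.pow M).const_mul 2)).sub (hC.pow M)).sub (hD.pow M)).sub hE

lemma fK_deriv_neg (M : ℕ) (hM : 1 ≤ M) {q : ℝ} (hq0 : 0 < q) (hq1 : q < 1) :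
    deriv (fK M) q < 0 := by
  rw [(fK_hasDerivAt M q).deriv]
  have hA : (1 - q) * (1 + q - q ^ 2) = 1 - 2 * q ^ 2 + q ^ 3 := by ring
  have hC : (1 - q) ^ 2 * (1 + 2 * q) = 1 - 3 * q ^ 2 + 2 * q ^ 3 := by ring
  rw [hA, hC]
  set b := (1 - 2 * q ^ 2 + q ^ 3) ^ (M - 1) with hb
  set c := (1 - 3 * q ^ 2 + 2 * q ^ 3) ^ (M - 1) with hc
  set d := (1 - q ^ 2) ^ (M - 1) with hd
  have hBpos : (0:ℝ) < 1 - 2 * q ^ 2 + q ^ 3 := by nlinarith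
  have hCnn : (0:ℝ) ≤ 1 - 3 * q ^ 2 + 2 * q ^ 3 := by nlinarith
  have hCB : (1:ℝ) - 3 * q ^ 2 + 2 * q ^ 3 ≤ 1 - 2 * q ^ 2 + q ^ 3 := by nlinarith
  have hD0 : (0:ℝ) ≤ 1 - q ^ 2 := by nlinarith
  have hD1 : (1:ℝ) - q ^ 2 ≤ 1 := by nlinarith
  have hbpos : 0 < b := pow_pos hBpos _
  have hcb : c ≤ b := pow_le_pow_left₀ hCnn hCB _
  have hd1 : d ≤ 1 := pow_le_one₀ hD0 hD1
  have hg : 3 * (3 * q - 4) * b + 6 * (1 - q) * c + 2 * d - 2 < 0 := by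
    nlinarith [mul_nonneg (by linarith : (0:ℝ) ≤ 6 * (1 - q)) (sub_nonneg.mpr hcb),
      mul_pos (by linarith : (0:ℝ) < 2 - q) hbpos]
  have hMq : (0:ℝ) < (M : ℝ) * q := by
    have : (1:ℝ) ≤ (M : ℝ) := by exact_mod_cast hM
    positivity
  calc (M : ℝ) * b * (3 * q ^ 2 - 4 * q)
        + 2 * ((M : ℝ) * b * (3 * q ^ 2 - 4 * q))
        - (M : ℝ) * c * (6 * q ^ 2 - 6 * q)
        - (M : ℝ) * d * (-(2 * q))
        - (M : ℝ) * (2 * q)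
      = (M : ℝ) * q * (3 * (3 * q - 4) * b + 6 * (1 - q) * c + 2 * d - 2) := by ring
    _ < 0 := mul_neg_of_pos_of_neg hMq hg

lemma fK_strictAntiOn (M : ℕ) (hM : 1 ≤ M) : StrictAntiOn (fK M) (Set.Icc (0:ℝ) 1) := by
  apply strictAntiOn_of_deriv_neg (convex_Icc 0 1)
  · exact fun x _ => ((fK_hasDerivAt M x).differentiableAt.continuousAt).continuousWithinAt
  · intro x hx
    rw [interior_Icc] at hx
    exact fK_deriv_neg M hM hx.1 hx.2

theorem kagome_f_unique_root (M : ℕ) (hM : 1 ≤ M) :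
    (fun q : ℝ =>
        ((1 - q) * (1 + q - q ^ 2)) ^ M + 2 * (1 - 2 * q ^ 2 + q ^ 3) ^ M -
          ((1 - q) ^ 2 * (1 + 2 * q)) ^ M - (1 - q ^ 2) ^ M - (M : ℝ) * q ^ 2) 0 = 1 ∧
    (fun q : ℝ =>
        ((1 - q) * (1 + q - q ^ 2)) ^ M + 2 * (1 - 2 * q ^ 2 + q ^ 3) ^ M -
          ((1 - q) ^ 2 * (1 + 2 * q)) ^ M - (1 - q ^ 2) ^ M - (M : ℝ) * q ^ 2) 1 = -(M : ℝ) ∧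
    StrictAntiOn
      (fun q : ℝ =>
        ((1 - q) * (1 + q - q ^ 2)) ^ M + 2 * (1 - 2 * q ^ 2 + q ^ 3) ^ M -
          ((1 - q) ^ 2 * (1 + 2 * q)) ^ M - (1 - q ^ 2) ^ M - (M : ℝ) * q ^ 2)
      (Set.Icc (0:ℝ) 1) ∧
    (∃! q : ℝ, q ∈ Set.Ioo (0:ℝ) 1 ∧
        ((1 - q) * (1 + q - q ^ 2)) ^ M + 2 * (1 - 2 * q ^ 2 + q ^ 3) ^ M -
          ((1 - q) ^ 2 * (1 + 2 * q)) ^ M - (1 - q ^ 2) ^ M - (M : ℝ) * q ^ 2 = 0) := by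
  have hM0 : M ≠ 0 := by omega
  have hfeq : (fun q : ℝ =>
      ((1 - q) * (1 + q - q ^ 2)) ^ M + 2 * (1 - 2 * q ^ 2 + q ^ 3) ^ M -
        ((1 - q) ^ 2 * (1 + 2 * q)) ^ M - (1 - q ^ 2) ^ M - (M : ℝ) * q ^ 2) = fK M := rfl
  have hF0 : fK M 0 = 1 := by norm_num [fK]
  have hF1 : fK M 1 = -(M : ℝ) := by norm_num [fK, zero_pow hM0]
  have hanti := fK_strictAntiOn M hM
  refine ⟨by rw [hfeq]; exact hF0, by rw [hfeq]; exact hF1, by rw [hfeq]; exact hanti, ?_⟩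
  have hcont : ContinuousOn (fK M) (Set.Icc (0:ℝ) 1) :=
    fun x _ => ((fK_hasDerivAt M x).differentiableAt.continuousAt).continuousWithinAt
  have hmem : (0:ℝ) ∈ Set.Ioo (fK M 1) (fK M 0) := by
    rw [hF0, hF1]
    constructor
    · have : (1:ℝ) ≤ (M : ℝ) := by exact_mod_cast hM
      linarith
    · norm_num
  obtain ⟨q, hqmem, hq0⟩ := intermediate_value_Ioo' (by norm_num : (0:ℝ) ≤ 1) hcont hmem
  refine ⟨q, ⟨hqmem, by rw [show ∀ x, ((1 - x) * (1 + x - x ^ 2)) ^ M + 2 * (1 - 2 * x ^ 2 + x ^ 3) ^ M -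
          ((1 - x) ^ 2 * (1 + 2 * x)) ^ M - (1 - x ^ 2) ^ M - (M : ℝ) * x ^ 2 = fK M x from fun _ => rfl]; exact hq0⟩, ?_⟩
  rintro r ⟨hrmem, hr0⟩
  have hr0' : fK M r = 0 := hr0
  have h1 : r ∈ Set.Icc (0:ℝ) 1 := Set.mem_Icc_of_Ioo hrmem
  have h2 : q ∈ Set.Icc (0:ℝ) 1 := Set.mem_Icc_of_Ioo hqmem
  exact hanti.injOn h1 h2 (by rw [hr0', hq0])
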